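/- Let a ≥ 1/4. Then for all u, v > 0, ∂ᵤ(Υ₁X₂) + ∂ᵥ(Υ₂X₂) = (-av² + v - 1)/(u²v²) - 1 < 0, where Υ₁(u,v) = (av-1)u + mu²v - u³v, Υ₂(u,v) = 1 - (b+cu+du²)v, and X₂(u,v) = 1/(u²v). -/

import Mathlib

theorem dulac_X2
    (a b c d m : ℝ) (ha : 1 / 4 ≤ a) :
    ∀ u v : ℝ, 0 < u → 0 < v →
      (deriv (fun u' => ((a * v - 1) * u' + m * u' ^ 2 * v - u' ^ 3 * v) * (1 / (u' ^ 2 * v))) u +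
       deriv (fun v' => (1 - (b + c * u + d * u ^ 2) * v') * (1 / (u ^ 2 * v'))) v =
        (-a * v ^ 2 + v - 1) / (u ^ 2 * v ^ 2) - 1) ∧
      (-a * v ^ 2 + v - 1) / (u ^ 2 * v ^ 2) - 1 < 0 := by
  intro u v hu hv
  have hu0 : u ≠ 0 := ne_of_gt hu
  have hv0 : v ≠ 0 := ne_of_gt hv
  have hd1 : u ^ 2 * v ≠ 0 := by positivity
  have hd2 : u ^ 2 * v ≠ 0 := hd1
  constructor
  · -- compute derivatives
    have hP : HasDerivAt (fun u' : ℝ => (a * v - 1) * u' + m * u' ^ 2 * v - u' ^ 3 * v)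
        ((a * v - 1) + m * (2 * u) * v - 3 * u ^ 2 * v) u := by
      have h := (((hasDerivAt_id u).const_mul (a * v - 1)).add
          (((hasDerivAt_pow 2 u).const_mul m).mul_const v)).sub
          ((hasDerivAt_pow 3 u).mul_const v)
      refine h.congr_deriv ?_
      norm_num
    have hQ : HasDerivAt (fun u' : ℝ => u' ^ 2 * v) (2 * u * v) u := by
      have h := (hasDerivAt_pow 2 u).mul_const v
      refine h.congr_deriv ?_
      norm_num
    have hQi : HasDerivAt (fun u' : ℝ => 1 / (u' ^ 2 * v))
        (-(2 * u * v) / (u ^ 2 * v) ^ 2) u := by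
      simp only [one_div]
      exact hQ.inv hd1
    have h1 : deriv (fun u' => ((a * v - 1) * u' + m * u' ^ 2 * v - u' ^ 3 * v) * (1 / (u' ^ 2 * v))) u = _ := (hP.mul hQi).deriv
    have hR : HasDerivAt (fun v' : ℝ => 1 - (b + c * u + d * u ^ 2) * v')
        (-(b + c * u + d * u ^ 2)) v := by
      have h := ((hasDerivAt_id v).const_mul (b + c * u + d * u ^ 2)).const_sub 1
      refine h.congr_deriv ?_
      ring
    have hS : HasDerivAt (fun v' : ℝ => u ^ 2 * v') (u ^ 2) v := by
      simpa using (hasDerivAt_id v).const_mul (u ^ 2)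
    have hSi : HasDerivAt (fun v' : ℝ => 1 / (u ^ 2 * v'))
        (-(u ^ 2) / (u ^ 2 * v) ^ 2) v := by
      simp only [one_div]
      exact hS.inv hd1
    have h2 : deriv (fun v' => (1 - (b + c * u + d * u ^ 2) * v') * (1 / (u ^ 2 * v'))) v = _ := (hR.mul hSi).deriv
    rw [h1, h2]
    field_simp
    ring
  · have hnum : -a * v ^ 2 + v - 1 ≤ 0 := by nlinarith [sq_nonneg (v - 2)]
    have hden : (0:ℝ) < u ^ 2 * v ^ 2 := by positivity
    have : (-a * v ^ 2 + v - 1) / (u ^ 2 * v ^ 2) ≤ 0 := div_nonpos_of_nonpos_of_nonneg hnum hden.le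
    linarith
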